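/- (Randomized response dominates the Laplace mechanism in the local model: variance comparison.) For every real x > 0, exp(x)/(exp(x) − 1)² ≤ 2/x². Equivalently, x²·exp(x) ≤ 2·(exp(x) − 1)². Interpreted for a local privacy budget ε' = x: the variance exp(ε')/(exp(ε') − 1)² of the unbiased randomized-response estimator of a bit is at most the variance 2/ε'² of the Laplace mechanism with scale 1/ε'. -/

import Mathlib

open Real

/-- Randomized response dominates the Laplace mechanism in the local model: for every
budget `x > 0`, the variance `exp(x)/(exp(x) − 1)²` of the unbiased randomized-response
estimator is at most the variance `2/x²` of the Laplace mechanism with scale `1/x`;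
equivalently `x²·exp(x) ≤ 2·(exp(x) − 1)²`. -/
theorem rr_variance_le_laplace_variance (x : ℝ) (hx : 0 < x) :
    Real.exp x / (Real.exp x - 1) ^ 2 ≤ 2 / x ^ 2 ∧
    x ^ 2 * Real.exp x ≤ 2 * (Real.exp x - 1) ^ 2 := by
  have h1 : x / 2 < Real.sinh (x / 2) := Real.self_lt_sinh_iff.mpr (by positivity)
  have he : Real.exp x = Real.exp (x / 2) ^ 2 := by
    rw [sq, ← Real.exp_add]; norm_num
  have hep : 0 < Real.exp (x / 2) := Real.exp_pos _
  have hs : Real.exp x - 1 = 2 * Real.exp (x / 2) * Real.sinh (x / 2) := by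
    rw [Real.sinh_eq, Real.exp_neg, he]
    field_simp
  have key : x ^ 2 * Real.exp x ≤ 2 * (Real.exp x - 1) ^ 2 := by
    rw [hs, he]
    have hsp : 0 < Real.sinh (x / 2) := lt_trans (by positivity) h1
    have hsq : (x / 2) ^ 2 ≤ Real.sinh (x / 2) ^ 2 :=
      pow_le_pow_left₀ (by positivity) h1.le 2
    nlinarith [mul_pos hep hep, mul_le_mul_of_nonneg_left hsq (le_of_lt (mul_pos hep hep))]
  refine ⟨?_, key⟩
  have h2 : 0 < Real.exp x - 1 := by
    linarith [Real.add_one_le_exp x]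
  rw [div_le_div_iff₀ (by positivity) (by positivity)]
  nlinarith [key]
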